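/- Fix α > 0. For r > 0 and x ∈ ℝ² define J_r(x) := ∫_{−r}^{r} [ ‖(r,s) − x‖_∞^{−2−α} + ‖(−r,s) − x‖_∞^{−2−α} + ‖(s,r) − x‖_∞^{−2−α} + ‖(s,−r) − x‖_∞^{−2−α} ] ds, the arc-length integral of z ↦ ‖z − x‖_∞^{−2−α} over the square { z ∈ ℝ² : ‖z‖_∞ = r }. Then for all r > 0 and all x ∈ ℝ² with ‖x‖_∞ < r, 2·(r − ‖x‖_∞)^{−1−α} ≤ J_r(x) ≤ 8·(1 + 1/(1+α))·(r − ‖x‖_∞)^{−1−α}. -/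

import Mathlib

open MeasureTheory intervalIntegral Set

private lemma cont_rpow_aux {c : ℝ} {f : ℝ → ℝ} (hf : Continuous f) (h : ∀ s, f s ≠ 0) :
    Continuous fun s => f s ^ c := by
  rw [continuous_iff_continuousAt]
  intro s
  exact (Real.continuousAt_rpow_const _ _ (Or.inl (h s))).comp hf.continuousAt

private lemma edgeU {α d r a : ℝ} (hα : 0 < α) (hd : 0 < d) (hdr : d ≤ r) :
    (∫ s in (-r)..r, max d |s - a| ^ (-(2 + α))) ≤ 2 * (1 + 1 / (1 + α)) * d ^ (-(1 + α)) := by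
  have h1α : (0:ℝ) < 1 + α := by linarith
  have hgpos : ∀ u : ℝ, 0 < max d |u| := fun u => lt_of_lt_of_le hd (le_max_left _ _)
  have hgc : Continuous fun u : ℝ => max d |u| ^ (-(2 + α)) :=
    cont_rpow_aux (continuous_const.max continuous_abs) (fun u => (hgpos u).ne')
  have hgnn : ∀ u : ℝ, 0 ≤ max d |u| ^ (-(2 + α)) :=
    fun u => Real.rpow_nonneg (hgpos u).le _
  set L := r + |a| with hL
  have hdL : d ≤ L := le_trans hdr (by rw [hL]; linarith [abs_nonneg a])
  -- change of variables
  have hcv : (∫ s in (-r)..r, max d |s - a| ^ (-(2 + α)))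
      = ∫ u in (-r - a)..(r - a), max d |u| ^ (-(2 + α)) :=
    integral_comp_sub_right (fun u => max d |u| ^ (-(2 + α))) a
  rw [hcv]
  have hstep : (∫ u in (-r - a)..(r - a), max d |u| ^ (-(2 + α)))
      ≤ ∫ u in (-L)..L, max d |u| ^ (-(2 + α)) := by
    apply integral_mono_interval (by rw [hL]; linarith [le_abs_self a])
      (by linarith [abs_nonneg a, neg_abs_le a, le_abs_self a])
      (by rw [hL]; linarith [neg_abs_le a])
      (Filter.Eventually.of_forall hgnn) (hgc.intervalIntegrable _ _)
  refine hstep.trans ?_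
  -- split the integral
  have hi : ∀ p q : ℝ, IntervalIntegrable (fun u => max d |u| ^ (-(2 + α))) volume p q :=
    fun p q => hgc.intervalIntegrable _ _
  have hsplit1 : (∫ u in (-L)..(-d), max d |u| ^ (-(2 + α)))
      + (∫ u in (-d)..d, max d |u| ^ (-(2 + α)))
      = ∫ u in (-L)..d, max d |u| ^ (-(2 + α)) :=
    integral_add_adjacent_intervals (hi _ _) (hi _ _)
  have hsplit2 : (∫ u in (-L)..d, max d |u| ^ (-(2 + α)))
      + (∫ u in d..L, max d |u| ^ (-(2 + α)))
      = ∫ u in (-L)..L, max d |u| ^ (-(2 + α)) :=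
    integral_add_adjacent_intervals (hi _ _) (hi _ _)
  rw [← hsplit2, ← hsplit1]
  -- middle piece
  have hmid : (∫ u in (-d)..d, max d |u| ^ (-(2 + α))) = 2 * d ^ (-(1 + α)) := by
    have heq : EqOn (fun u : ℝ => max d |u| ^ (-(2 + α))) (fun _ => d ^ (-(2 + α)))
        (uIcc (-d) d) := by
      intro u hu
      rw [uIcc_of_le (by linarith)] at hu
      have : |u| ≤ d := abs_le.2 ⟨hu.1, hu.2⟩
      simp [max_eq_left this]
    rw [integral_congr heq, intervalIntegral.integral_const, smul_eq_mul]
    have h' : (-(1 + α) : ℝ) = 1 + -(2 + α) := by ring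
    rw [h', Real.rpow_add hd, Real.rpow_one]
    ring
  -- right piece
  have hright : (∫ u in d..L, max d |u| ^ (-(2 + α))) ≤ d ^ (-(1 + α)) / (1 + α) := by
    have heq : EqOn (fun u : ℝ => max d |u| ^ (-(2 + α))) (fun u => u ^ (-(2 + α)))
        (uIcc d L) := by
      intro u hu
      rw [uIcc_of_le hdL] at hu
      have h1 : |u| = u := abs_of_nonneg (le_trans hd.le hu.1)
      simp [h1, max_eq_right hu.1]
    rw [integral_congr heq, integral_rpow]
    · have he : (-(2 + α) + 1 : ℝ) = -(1 + α) := by ring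
      rw [he]
      have hL0 : 0 ≤ L ^ (-(1 + α)) := Real.rpow_nonneg (lt_of_lt_of_le hd hdL).le _
      have h3 : (L ^ (-(1 + α)) - d ^ (-(1 + α))) / (-(1 + α))
          = (d ^ (-(1 + α)) - L ^ (-(1 + α))) / (1 + α) := by
        rw [div_neg, ← neg_div]; congr 1; ring
      rw [h3]
      gcongr
      linarith
    · right
      constructor
      · intro h; linarith
      · rw [uIcc_of_le hdL]; intro h; exact absurd h.1 (by linarith)
  -- left piece
  have hleft : (∫ u in (-L)..(-d), max d |u| ^ (-(2 + α))) ≤ d ^ (-(1 + α)) / (1 + α) := by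
    have : (∫ u in (-L)..(-d), max d |u| ^ (-(2 + α)))
        = ∫ u in d..L, max d |u| ^ (-(2 + α)) := by
      rw [← integral_comp_neg (fun u => max d |u| ^ (-(2 + α)))]
      simp [abs_neg]
    rw [this]; exact hright
  have hAnn : 0 ≤ d ^ (-(1 + α)) := Real.rpow_nonneg hd.le _
  have : 2 * (1 + 1 / (1 + α)) * d ^ (-(1 + α))
      = d ^ (-(1 + α)) / (1 + α) + 2 * d ^ (-(1 + α)) + d ^ (-(1 + α)) / (1 + α) := by
    field_simp; ring
  rw [this]
  linarith [hmid, hright, hleft]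

private lemma edgeL {α d a r : ℝ} (hα : 0 < α) (hd : 0 < d) (har : |a| + d ≤ r) {F : ℝ → ℝ}
    (hF0 : ∀ s, 0 ≤ F s)
    (hF : ∀ s ∈ Icc (a - d) (a + d), d ^ (-(2 + α)) ≤ F s)
    (hInt : IntervalIntegrable F volume (-r) r) :
    2 * d ^ (-(1 + α)) ≤ ∫ s in (-r)..r, F s := by
  have ha1 : -r ≤ a - d := by linarith [neg_abs_le a]
  have ha2 : a + d ≤ r := by linarith [le_abs_self a]
  have hsub : uIcc (a - d) (a + d) ⊆ uIcc (-r) r := by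
    apply uIcc_subset_uIcc <;> rw [uIcc_of_le (by linarith : (-r) ≤ r)] <;>
      constructor <;> linarith
  have h1 : (∫ s in (a - d)..(a + d), F s) ≤ ∫ s in (-r)..r, F s :=
    integral_mono_interval ha1 (by linarith) ha2
      (Filter.Eventually.of_forall hF0) hInt
  have h2 : (∫ s in (a - d)..(a + d), (d ^ (-(2 + α)) : ℝ)) ≤ ∫ s in (a - d)..(a + d), F s :=
    integral_mono_on (by linarith) intervalIntegrable_const (hInt.mono_set hsub) hF
  have h3 : (∫ s in (a - d)..(a + d), (d ^ (-(2 + α)) : ℝ)) = 2 * d ^ (-(1 + α)) := by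
    rw [intervalIntegral.integral_const, smul_eq_mul]
    have h' : (-(1 + α) : ℝ) = 1 + -(2 + α) := by ring
    rw [h', Real.rpow_add hd, Real.rpow_one]
    ring
  linarith

/-- `J_r(x)`: arc-length integral of `z ↦ ‖z − x‖_∞^{−2−α}` over the square `‖z‖_∞ = r`,
written as a sum of four edge integrals.  The norm on `ℝ × ℝ` is the sup norm. -/
noncomputable def Jsq (α : ℝ) (r : ℝ) (x : ℝ × ℝ) : ℝ :=
  ∫ s in (-r)..r,
    (‖((r, s) : ℝ × ℝ) - x‖ ^ (-(2 + α)) + ‖((-r, s) : ℝ × ℝ) - x‖ ^ (-(2 + α)) +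
     ‖((s, r) : ℝ × ℝ) - x‖ ^ (-(2 + α)) + ‖((s, -r) : ℝ × ℝ) - x‖ ^ (-(2 + α)))

/-- two-sided bounds on `J_r(x)` for `‖x‖_∞ < r`. -/
theorem Jsq_bounds_inside (α : ℝ) (hα : 0 < α) :
    ∀ r : ℝ, 0 < r → ∀ x : ℝ × ℝ, ‖x‖ < r →
      2 * (r - ‖x‖) ^ (-(1 + α)) ≤ Jsq α r x ∧
      Jsq α r x ≤ 8 * (1 + 1 / (1 + α)) * (r - ‖x‖) ^ (-(1 + α)) := by
  intro r hr x hx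
  set d := r - ‖x‖ with hdd
  have hd : 0 < d := by rw [hdd]; linarith
  have hxn : ‖x‖ = max |x.1| |x.2| := by
    rw [Prod.norm_def, Real.norm_eq_abs, Real.norm_eq_abs]
  have hx1 : |x.1| ≤ ‖x‖ := hxn ▸ le_max_left _ _
  have hx2 : |x.2| ≤ ‖x‖ := hxn ▸ le_max_right _ _
  have hn0 : (0:ℝ) ≤ ‖x‖ := norm_nonneg x
  have hdr : d ≤ r := by rw [hdd]; linarith
  -- explicit sup-norm formulas along the four edges
  have hN1 : ∀ s : ℝ, ‖((r, s) : ℝ × ℝ) - x‖ = max |r - x.1| |s - x.2| := by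
    intro s; rw [Prod.norm_def]; simp [Real.norm_eq_abs]
  have hN2 : ∀ s : ℝ, ‖((-r, s) : ℝ × ℝ) - x‖ = max |(-r) - x.1| |s - x.2| := by
    intro s; rw [Prod.norm_def]; simp [Real.norm_eq_abs]
  have hN3 : ∀ s : ℝ, ‖((s, r) : ℝ × ℝ) - x‖ = max |s - x.1| |r - x.2| := by
    intro s; rw [Prod.norm_def]; simp [Real.norm_eq_abs]
  have hN4 : ∀ s : ℝ, ‖((s, -r) : ℝ × ℝ) - x‖ = max |s - x.1| |(-r) - x.2| := by
    intro s; rw [Prod.norm_def]; simp [Real.norm_eq_abs]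
  -- the four side distances are at least `d`
  have hb1 : d ≤ |r - x.1| := by
    have := abs_sub_abs_le_abs_sub r x.1
    rw [abs_of_pos hr] at this; linarith
  have hb2 : d ≤ |(-r) - x.1| := by
    have := abs_sub_abs_le_abs_sub (-r) x.1
    rw [abs_neg, abs_of_pos hr] at this; linarith
  have hb3 : d ≤ |r - x.2| := by
    have := abs_sub_abs_le_abs_sub r x.2
    rw [abs_of_pos hr] at this; linarith
  have hb4 : d ≤ |(-r) - x.2| := by
    have := abs_sub_abs_le_abs_sub (-r) x.2
    rw [abs_neg, abs_of_pos hr] at this; linarith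
  -- continuity of the four terms
  have hc1 : Continuous fun s : ℝ => ‖((r, s) : ℝ × ℝ) - x‖ ^ (-(2 + α)) :=
    cont_rpow_aux (((continuous_const.prodMk continuous_id).sub continuous_const).norm)
      (fun s => by rw [hN1]; exact (lt_of_lt_of_le hd (le_trans hb1 (le_max_left _ _))).ne')
  have hc2 : Continuous fun s : ℝ => ‖((-r, s) : ℝ × ℝ) - x‖ ^ (-(2 + α)) :=
    cont_rpow_aux (((continuous_const.prodMk continuous_id).sub continuous_const).norm)
      (fun s => by rw [hN2]; exact (lt_of_lt_of_le hd (le_trans hb2 (le_max_left _ _))).ne')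
  have hc3 : Continuous fun s : ℝ => ‖((s, r) : ℝ × ℝ) - x‖ ^ (-(2 + α)) :=
    cont_rpow_aux (((continuous_id.prodMk continuous_const).sub continuous_const).norm)
      (fun s => by rw [hN3]; exact (lt_of_lt_of_le hd (le_trans hb3 (le_max_right _ _))).ne')
  have hc4 : Continuous fun s : ℝ => ‖((s, -r) : ℝ × ℝ) - x‖ ^ (-(2 + α)) :=
    cont_rpow_aux (((continuous_id.prodMk continuous_const).sub continuous_const).norm)
      (fun s => by rw [hN4]; exact (lt_of_lt_of_le hd (le_trans hb4 (le_max_right _ _))).ne')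
  have hFc : Continuous fun s : ℝ =>
      (‖((r, s) : ℝ × ℝ) - x‖ ^ (-(2 + α)) + ‖((-r, s) : ℝ × ℝ) - x‖ ^ (-(2 + α)) +
       ‖((s, r) : ℝ × ℝ) - x‖ ^ (-(2 + α)) + ‖((s, -r) : ℝ × ℝ) - x‖ ^ (-(2 + α))) :=
    ((hc1.add hc2).add hc3).add hc4
  have hFint : IntervalIntegrable (fun s : ℝ =>
      (‖((r, s) : ℝ × ℝ) - x‖ ^ (-(2 + α)) + ‖((-r, s) : ℝ × ℝ) - x‖ ^ (-(2 + α)) +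
       ‖((s, r) : ℝ × ℝ) - x‖ ^ (-(2 + α)) + ‖((s, -r) : ℝ × ℝ) - x‖ ^ (-(2 + α))))
      volume (-r) r := hFc.intervalIntegrable _ _
  have hnn : ∀ z : ℝ × ℝ, 0 ≤ ‖z‖ ^ (-(2 + α)) := fun z => Real.rpow_nonneg (norm_nonneg z) _
  have hFnn : ∀ s : ℝ, (0:ℝ) ≤
      (‖((r, s) : ℝ × ℝ) - x‖ ^ (-(2 + α)) + ‖((-r, s) : ℝ × ℝ) - x‖ ^ (-(2 + α)) +
       ‖((s, r) : ℝ × ℝ) - x‖ ^ (-(2 + α)) + ‖((s, -r) : ℝ × ℝ) - x‖ ^ (-(2 + α))) :=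
    fun s => by have := hnn (((r, s) : ℝ × ℝ) - x); have := hnn (((-r, s) : ℝ × ℝ) - x)
                have := hnn (((s, r) : ℝ × ℝ) - x); have := hnn (((s, -r) : ℝ × ℝ) - x)
                linarith
  constructor
  · -- lower bound
    unfold Jsq
    rcases le_total |x.2| |x.1| with h12 | h12
    · have hno : ‖x‖ = |x.1| := by rw [hxn, max_eq_left h12]
      have har : |x.2| + d ≤ r := by linarith
      rcases le_or_gt 0 x.1 with hs | hs
      · -- near the right edge, term 1
        refine edgeL hα hd har hFnn (fun s hs' => ?_) hFint
        have habs : |s - x.2| ≤ d := abs_le.2 ⟨by linarith [hs'.1], by linarith [hs'.2]⟩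
        have hx1e : x.1 = ‖x‖ := by rw [hno, abs_of_nonneg hs]
        have h1 : |r - x.1| = d := by
          rw [abs_of_nonneg (by linarith), hx1e]
        have hnorm1 : ‖((r, s) : ℝ × ℝ) - x‖ = d := by
          rw [hN1, h1, max_eq_left habs]
        have e1 : ‖((r, s) : ℝ × ℝ) - x‖ ^ (-(2 + α)) = d ^ (-(2 + α)) := by rw [hnorm1]
        have := hnn (((-r, s) : ℝ × ℝ) - x); have := hnn (((s, r) : ℝ × ℝ) - x)
        have := hnn (((s, -r) : ℝ × ℝ) - x)
        linarith
      · -- near the left edge, term 2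
        refine edgeL hα hd har hFnn (fun s hs' => ?_) hFint
        have habs : |s - x.2| ≤ d := abs_le.2 ⟨by linarith [hs'.1], by linarith [hs'.2]⟩
        have hx1e : x.1 = -‖x‖ := by rw [hno, abs_of_neg hs]; ring
        have h1 : |(-r) - x.1| = d := by
          rw [abs_of_nonpos (by linarith)]; rw [hdd]; linarith
        have hnorm2 : ‖((-r, s) : ℝ × ℝ) - x‖ = d := by
          rw [hN2, h1, max_eq_left habs]
        have e2 : ‖((-r, s) : ℝ × ℝ) - x‖ ^ (-(2 + α)) = d ^ (-(2 + α)) := by rw [hnorm2]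
        have := hnn (((r, s) : ℝ × ℝ) - x); have := hnn (((s, r) : ℝ × ℝ) - x)
        have := hnn (((s, -r) : ℝ × ℝ) - x)
        linarith
    · have hno : ‖x‖ = |x.2| := by rw [hxn, max_eq_right h12]
      have har : |x.1| + d ≤ r := by linarith
      rcases le_or_gt 0 x.2 with hs | hs
      · -- near the top edge, term 3
        refine edgeL hα hd har hFnn (fun s hs' => ?_) hFint
        have habs : |s - x.1| ≤ d := abs_le.2 ⟨by linarith [hs'.1], by linarith [hs'.2]⟩
        have hx2e : x.2 = ‖x‖ := by rw [hno, abs_of_nonneg hs]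
        have h1 : |r - x.2| = d := by
          rw [abs_of_nonneg (by linarith), hx2e]
        have hnorm3 : ‖((s, r) : ℝ × ℝ) - x‖ = d := by
          rw [hN3, h1, max_eq_right habs]
        have e3 : ‖((s, r) : ℝ × ℝ) - x‖ ^ (-(2 + α)) = d ^ (-(2 + α)) := by rw [hnorm3]
        have := hnn (((r, s) : ℝ × ℝ) - x); have := hnn (((-r, s) : ℝ × ℝ) - x)
        have := hnn (((s, -r) : ℝ × ℝ) - x)
        linarith
      · -- near the bottom edge, term 4
        refine edgeL hα hd har hFnn (fun s hs' => ?_) hFint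
        have habs : |s - x.1| ≤ d := abs_le.2 ⟨by linarith [hs'.1], by linarith [hs'.2]⟩
        have hx2e : x.2 = -‖x‖ := by rw [hno, abs_of_neg hs]; ring
        have h1 : |(-r) - x.2| = d := by
          rw [abs_of_nonpos (by linarith)]; rw [hdd]; linarith
        have hnorm4 : ‖((s, -r) : ℝ × ℝ) - x‖ = d := by
          rw [hN4, h1, max_eq_right habs]
        have e4 : ‖((s, -r) : ℝ × ℝ) - x‖ ^ (-(2 + α)) = d ^ (-(2 + α)) := by rw [hnorm4]
        have := hnn (((r, s) : ℝ × ℝ) - x); have := hnn (((-r, s) : ℝ × ℝ) - x)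
        have := hnn (((s, r) : ℝ × ℝ) - x)
        linarith
  · -- upper bound
    unfold Jsq
    have hup : ∀ b u : ℝ, d ≤ b → (max b |u|) ^ (-(2 + α)) ≤ (max d |u|) ^ (-(2 + α)) :=
      fun b u hb => Real.rpow_le_rpow_of_nonpos (lt_of_lt_of_le hd (le_max_left _ _))
        (max_le_max hb le_rfl) (by linarith)
    have hg2c : Continuous fun u : ℝ => max d |u - x.2| ^ (-(2 + α)) :=
      cont_rpow_aux (continuous_const.max (continuous_id.sub continuous_const).abs)
        (fun u => (lt_of_lt_of_le hd (le_max_left _ _)).ne')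
    have hg1c : Continuous fun u : ℝ => max d |u - x.1| ^ (-(2 + α)) :=
      cont_rpow_aux (continuous_const.max (continuous_id.sub continuous_const).abs)
        (fun u => (lt_of_lt_of_le hd (le_max_left _ _)).ne')
    have hmono : (∫ s in (-r)..r,
        (‖((r, s) : ℝ × ℝ) - x‖ ^ (-(2 + α)) + ‖((-r, s) : ℝ × ℝ) - x‖ ^ (-(2 + α)) +
         ‖((s, r) : ℝ × ℝ) - x‖ ^ (-(2 + α)) + ‖((s, -r) : ℝ × ℝ) - x‖ ^ (-(2 + α))))
        ≤ ∫ s in (-r)..r,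
        (max d |s - x.2| ^ (-(2 + α)) + max d |s - x.2| ^ (-(2 + α)) +
         max d |s - x.1| ^ (-(2 + α)) + max d |s - x.1| ^ (-(2 + α))) := by
      apply integral_mono_on (by linarith) hFint
        ((((hg2c.add hg2c).add hg1c).add hg1c).intervalIntegrable _ _)
      intro s _
      have u1 : ‖((r, s) : ℝ × ℝ) - x‖ ^ (-(2 + α)) ≤ max d |s - x.2| ^ (-(2 + α)) := by
        rw [hN1]; exact hup _ _ hb1
      have u2 : ‖((-r, s) : ℝ × ℝ) - x‖ ^ (-(2 + α)) ≤ max d |s - x.2| ^ (-(2 + α)) := by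
        rw [hN2]; exact hup _ _ hb2
      have u3 : ‖((s, r) : ℝ × ℝ) - x‖ ^ (-(2 + α)) ≤ max d |s - x.1| ^ (-(2 + α)) := by
        rw [hN3, max_comm]; exact hup _ _ hb3
      have u4 : ‖((s, -r) : ℝ × ℝ) - x‖ ^ (-(2 + α)) ≤ max d |s - x.1| ^ (-(2 + α)) := by
        rw [hN4, max_comm]; exact hup _ _ hb4
      simp only [Pi.add_apply]; linarith
    have hsplit : (∫ s in (-r)..r,
        (max d |s - x.2| ^ (-(2 + α)) + max d |s - x.2| ^ (-(2 + α)) +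
         max d |s - x.1| ^ (-(2 + α)) + max d |s - x.1| ^ (-(2 + α))))
        = (∫ s in (-r)..r, max d |s - x.2| ^ (-(2 + α)))
          + (∫ s in (-r)..r, max d |s - x.2| ^ (-(2 + α)))
          + (∫ s in (-r)..r, max d |s - x.1| ^ (-(2 + α)))
          + (∫ s in (-r)..r, max d |s - x.1| ^ (-(2 + α))) := by
      rw [← intervalIntegral.integral_add (hg2c.intervalIntegrable _ _) (hg2c.intervalIntegrable _ _),
          ← intervalIntegral.integral_add (f := fun u => max d |u - x.2| ^ (-(2 + α)) + max d |u - x.2| ^ (-(2 + α))) ((hg2c.add hg2c).intervalIntegrable _ _) (hg1c.intervalIntegrable _ _),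
          ← intervalIntegral.integral_add (f := fun u => max d |u - x.2| ^ (-(2 + α)) + max d |u - x.2| ^ (-(2 + α)) + max d |u - x.1| ^ (-(2 + α))) (((hg2c.add hg2c).add hg1c).intervalIntegrable _ _) (hg1c.intervalIntegrable _ _)]
    have he2 := edgeU (a := x.2) hα hd hdr
    have he1 := edgeU (a := x.1) hα hd hdr
    calc (∫ s in (-r)..r,
        (‖((r, s) : ℝ × ℝ) - x‖ ^ (-(2 + α)) + ‖((-r, s) : ℝ × ℝ) - x‖ ^ (-(2 + α)) +
         ‖((s, r) : ℝ × ℝ) - x‖ ^ (-(2 + α)) + ‖((s, -r) : ℝ × ℝ) - x‖ ^ (-(2 + α))))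
        ≤ _ := hmono
      _ = _ := hsplit
      _ ≤ 8 * (1 + 1 / (1 + α)) * d ^ (-(1 + α)) := by linarith
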